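/- Let a, c, n be integers with 1 ≤ a ≤ c and −3a ≤ n < 0. Then the following are equivalent: (i) n = −3a; (ii) every bihomogeneous polynomial F of type (n; a,a,c) in ℂ[u,v,x,y,z,t] lies in an ideal of the form (t, λy+μz) for some pair (λ,μ) ∈ ℂ² with (λ,μ) ≠ (0,0). (Geometrically: when a = b and n < 0, every member X ∈ |3M+nL| on 𝔽(0,a,a,c) contains a surface of the form {t = ℓ(y,z) = 0} with ℓ a nonzero linear form if and only if n = −3a.) -/

import Mathlib

open MvPolynomial

/-- Variables of `ℂ[u,v,x,y,z,t]` are indexed by `Fin 6` as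
`u = X 0`, `v = X 1`, `x = X 2`, `y = X 3`, `z = X 4`, `t = X 5`.
A polynomial `F` is bihomogeneous of type `(n; a,b,c)` if every monomial
`u^p v^q x^α y^β z^γ t^δ` occurring in it satisfies `α+β+γ+δ = 3` and
`p + q = n + a*β + b*γ + c*δ`. -/
def Bihom (n a b c : ℤ) (F : MvPolynomial (Fin 6) ℂ) : Prop :=
  ∀ d ∈ F.support,
    d 2 + d 3 + d 4 + d 5 = 3 ∧
    (d 0 : ℤ) + (d 1 : ℤ) = n + a * (d 3 : ℤ) + b * (d 4 : ℤ) + c * (d 5 : ℤ)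

namespace Stmt1Aux

noncomputable section

abbrev P6 := MvPolynomial (Fin 6) ℂ

lemma mono_form (i j : Fin 6) (p q : ℕ) (r : ℂ) :
    (C r * X i ^ p * X j ^ q : P6) = monomial (Finsupp.single i p + Finsupp.single j q) r := by
  simp [X_pow_eq_monomial, C_mul_monomial, monomial_mul]

lemma mono_form' (i j : Fin 6) (p q : ℕ) :
    (X i ^ p * X j ^ q : P6) = monomial (Finsupp.single i p + Finsupp.single j q) 1 := by
  have := mono_form i j p q 1
  simpa using this

/-- factorization of a binary cubic in `X 3, X 4` over `ℂ` -/
lemma cubic_factor (c3 c2 c1 c0 : ℂ) :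
    ∃ l m : ℂ, ¬(l = 0 ∧ m = 0) ∧ ∃ Q : P6,
      (C c3 * X 3 ^ 3 + C c2 * X 3 ^ 2 * X 4 + C c1 * X 3 * X 4 ^ 2 + C c0 * X 4 ^ 3 : P6)
        = (C l * X 3 + C m * X 4) * Q := by
  by_cases h3 : c3 = 0
  · refine ⟨0, 1, by simp, C c2 * X 3 ^ 2 + C c1 * X 3 * X 4 + C c0 * X 4 ^ 2, ?_⟩
    subst h3; simp only [map_zero, map_one]; ring
  · obtain ⟨r, hr⟩ := Complex.exists_root (f := Polynomial.C c3 * Polynomial.X ^ 3 +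
      Polynomial.C c2 * Polynomial.X ^ 2 + Polynomial.C c1 * Polynomial.X + Polynomial.C c0)
      (by rw [Polynomial.degree_cubic h3]; norm_num)
    have hroot : c3 * r ^ 3 + c2 * r ^ 2 + c1 * r + c0 = 0 := by
      simpa [Polynomial.IsRoot] using hr
    refine ⟨1, -r, by simp, C c3 * X 3 ^ 2 + C (c2 + c3 * r) * X 3 * X 4 +
      C (c1 + c2 * r + c3 * r ^ 2) * X 4 ^ 2, ?_⟩
    have hC : (C (c3 * r ^ 3 + c2 * r ^ 2 + c1 * r + c0) : P6) = 0 := by rw [hroot, map_zero]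
    simp only [map_add, map_mul, map_pow, map_neg, map_one] at hC ⊢
    linear_combination (X 4 : P6) ^ 3 * hC

/-- structure of `t`-free monomials in the boundary case -/
lemma key_support (a c : ℤ) (ha : 1 ≤ a) (F : MvPolynomial (Fin 6) ℂ)
    (hF : Bihom (-3 * a) a a c F) (d : Fin 6 →₀ ℕ) (hd : d ∈ F.support) (h5 : d 5 = 0) :
    d = Finsupp.single 3 (d 3) + Finsupp.single 4 (d 4) ∧ d 3 + d 4 = 3 := by
  obtain ⟨h1, h2⟩ := hF d hd
  rw [h5] at h1 h2
  push_cast at h2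
  have hge : (3 : ℤ) ≤ (d 3 : ℤ) + (d 4 : ℤ) := by
    nlinarith [Int.ofNat_nonneg (d 0), Int.ofNat_nonneg (d 1)]
  have h34 : d 3 + d 4 = 3 ∧ d 2 = 0 := by omega
  have h01 : (d 0 : ℤ) + (d 1 : ℤ) = 0 := by
    have : ((d 3 : ℤ) + d 4) = 3 := by exact_mod_cast h34.1
    nlinarith
  have hd0 : d 0 = 0 := by omega
  have hd1 : d 1 = 0 := by omega
  refine ⟨?_, h34.1⟩
  ext i
  fin_cases i <;> simp [hd0, hd1, h34.2, h5, Finsupp.single_apply]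

/-- abbreviation for the `t`-free cubic monomial exponents -/
def mm (i : ℕ) : Fin 6 →₀ ℕ := Finsupp.single 3 i + Finsupp.single 4 (3 - i)

lemma mm_at3 (i : ℕ) : mm i 3 = i := by simp [mm, Finsupp.single_apply]

lemma mm_ne {i j : ℕ} (h : i ≠ j) : mm i ≠ mm j := fun he => h (by
  have := DFunLike.congr_fun he (3 : Fin 6)
  simpa [mm_at3] using this)

/-- Forward direction: in the boundary case every bihomogeneous `F` lies in such an ideal. -/
lemma forward (a c : ℤ) (ha : 1 ≤ a) (F : MvPolynomial (Fin 6) ℂ)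
    (hF : Bihom (-3 * a) a a c F) :
    ∃ l m : ℂ, ¬(l = 0 ∧ m = 0) ∧
      F ∈ Ideal.span ({X 5, C l * X 3 + C m * X 4} : Set (MvPolynomial (Fin 6) ℂ)) := by
  set c3 := coeff (mm 3) F with hc3
  set c2 := coeff (mm 2) F with hc2
  set c1 := coeff (mm 1) F with hc1
  set c0 := coeff (mm 0) F with hc0
  set G : P6 := C c3 * X 3 ^ 3 + C c2 * X 3 ^ 2 * X 4 + C c1 * X 3 * X 4 ^ 2 + C c0 * X 4 ^ 3
    with hG
  have hGm : G = monomial (mm 3) c3 + monomial (mm 2) c2 + monomial (mm 1) c1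
      + monomial (mm 0) c0 := by
    have hmm3 : mm 3 = Finsupp.single (3 : Fin 6) 3 + Finsupp.single 4 0 := by
      rw [mm]
    have hmm2 : mm 2 = Finsupp.single (3 : Fin 6) 2 + Finsupp.single 4 1 := by
      rw [mm]
    have hmm1 : mm 1 = Finsupp.single (3 : Fin 6) 1 + Finsupp.single 4 2 := by
      rw [mm]
    have hmm0 : mm 0 = Finsupp.single (3 : Fin 6) 0 + Finsupp.single 4 3 := by
      rw [mm]
    rw [hG, hmm3, hmm2, hmm1, hmm0, ← mono_form, ← mono_form, ← mono_form, ← mono_form]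
    ring
  -- coefficient comparison away from `t`
  have hcoeff : ∀ d : Fin 6 →₀ ℕ, d 5 = 0 → coeff d F = coeff d G := by
    intro d h5
    by_cases e3 : d = mm 3
    · rw [hGm]; subst e3
      simp [coeff_monomial, mm_ne (show (2:ℕ) ≠ 3 by norm_num),
        mm_ne (show (1:ℕ) ≠ 3 by norm_num), mm_ne (show (0:ℕ) ≠ 3 by norm_num)]
      exact hc3.symm
    by_cases e2 : d = mm 2
    · rw [hGm]; subst e2
      simp [coeff_monomial, mm_ne (show (3:ℕ) ≠ 2 by norm_num),
        mm_ne (show (1:ℕ) ≠ 2 by norm_num), mm_ne (show (0:ℕ) ≠ 2 by norm_num)]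
      exact hc2.symm
    by_cases e1 : d = mm 1
    · rw [hGm]; subst e1
      simp [coeff_monomial, mm_ne (show (3:ℕ) ≠ 1 by norm_num),
        mm_ne (show (2:ℕ) ≠ 1 by norm_num), mm_ne (show (0:ℕ) ≠ 1 by norm_num)]
      exact hc1.symm
    by_cases e0 : d = mm 0
    · rw [hGm]; subst e0
      simp [coeff_monomial, mm_ne (show (3:ℕ) ≠ 0 by norm_num),
        mm_ne (show (2:ℕ) ≠ 0 by norm_num), mm_ne (show (1:ℕ) ≠ 0 by norm_num)]
      exact hc0.symm
    · -- `d` is none of the four monomials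
      have hFd : coeff d F = 0 := by
        by_contra hne
        have hd : d ∈ F.support := by simpa [mem_support_iff] using hne
        obtain ⟨hdeq, hsum⟩ := key_support a c ha F hF d hd h5
        have h3 : d 3 = 0 ∨ d 3 = 1 ∨ d 3 = 2 ∨ d 3 = 3 := by omega
        have h4 : d 4 = 3 - d 3 := by omega
        rcases h3 with h | h | h | h
        · exact e0 (by rw [hdeq, h, h4, h]; rfl)
        · exact e1 (by rw [hdeq, h, h4, h]; rfl)
        · exact e2 (by rw [hdeq, h, h4, h]; rfl)
        · exact e3 (by rw [hdeq, h, h4, h]; rfl)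
      have hGd : coeff d G = 0 := by
        rw [hGm]
        simp only [coeff_add, coeff_monomial]
        rw [if_neg (fun h => e3 h.symm), if_neg (fun h => e2 h.symm),
          if_neg (fun h => e1 h.symm), if_neg (fun h => e0 h.symm)]
        ring
      rw [hFd, hGd]
  -- F - G is divisible by t = X 5
  have hdvd : (X 5 : P6) ∣ F - G := by
    rw [X_dvd_iff_modMonomial_eq_zero]
    apply MvPolynomial.ext
    intro d
    by_cases hle : Finsupp.single (5 : Fin 6) 1 ≤ d
    · rw [coeff_modMonomial_of_le _ hle, coeff_zero]
    · rw [coeff_modMonomial_of_not_le _ hle, coeff_zero]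
      have h5 : d 5 = 0 := by
        by_contra h
        exact hle (Finsupp.single_le_iff.mpr (by omega))
      rw [coeff_sub, hcoeff d h5, sub_self]
  obtain ⟨l, m, hlm, Q, hQ⟩ := cubic_factor c3 c2 c1 c0
  refine ⟨l, m, hlm, ?_⟩
  obtain ⟨W, hW⟩ := hdvd
  have hFeq : F = X 5 * W + (C l * X 3 + C m * X 4) * Q := by
    rw [← hQ, ← hG, ← hW]; ring
  rw [hFeq]
  refine Ideal.add_mem _ ?_ ?_
  · exact Ideal.mul_mem_right _ _ (Ideal.subset_span (by simp))
  · exact Ideal.mul_mem_right _ _ (Ideal.subset_span (by simp))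

end

end Stmt1Aux

open Stmt1Aux

/-- For `1 ≤ a ≤ c` and `-3a ≤ n < 0`: we have `n = -3a` if and only if every
bihomogeneous polynomial of type `(n; a,a,c)` lies in an ideal `(t, λy + μz)`
for some `(λ,μ) ≠ (0,0)`.  (Every member `X ∈ |3M+nL|` on `𝔽(0,a,a,c)` contains
a surface `{t = ℓ(y,z) = 0}` with `ℓ` a nonzero linear form iff `n = -3a`.) -/
theorem stmt1 (a c n : ℤ) (ha : 1 ≤ a) (hac : a ≤ c) (hn1 : -3 * a ≤ n) (hn2 : n < 0) :
    n = -3 * a ↔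
      ∀ F : MvPolynomial (Fin 6) ℂ, Bihom n a a c F →
        ∃ l m : ℂ, ¬(l = 0 ∧ m = 0) ∧
          F ∈ Ideal.span ({X 5, C l * X 3 + C m * X 4} : Set (MvPolynomial (Fin 6) ℂ)) := by
  constructor
  · intro hn F hF
    subst hn
    exact forward a c ha F hF
  · intro h
    by_contra hne
    -- so -3a < n < 0; build a counterexample
    have hNpos : 0 < n + 3 * a := by omega
    set N : ℕ := (n + 3 * a).toNat with hNdef
    have hNc : (N : ℤ) = n + 3 * a := Int.toNat_of_nonneg (by omega)
    have hN1 : 1 ≤ N := by omega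
    set s1 : Fin 6 →₀ ℕ := Finsupp.single 0 N + Finsupp.single 3 3 with hs1
    set s2 : Fin 6 →₀ ℕ := Finsupp.single 1 N + Finsupp.single 4 3 with hs2
    set F : P6 := X 0 ^ N * X 3 ^ 3 + X 1 ^ N * X 4 ^ 3 with hFdef
    have hFm : F = monomial s1 1 + monomial s2 1 := by
      rw [hFdef, mono_form' 0 3 N 3, mono_form' 1 4 N 3]
    have hBF : Bihom n a a c F := by
      intro d hd
      have hd' : d ∈ (monomial s1 (1:ℂ) + monomial s2 (1:ℂ)).support := by rwa [← hFm]
      have hmem : d = s1 ∨ d = s2 := by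
        have := MvPolynomial.support_add hd'
        rw [support_monomial, support_monomial] at this
        simpa using this
      rcases hmem with rfl | rfl
      · refine ⟨by simp [hs1, Finsupp.single_apply], ?_⟩
        simp [hs1, Finsupp.single_apply]
        linarith [hNc]
      · refine ⟨by simp [hs2, Finsupp.single_apply], ?_⟩
        simp [hs2, Finsupp.single_apply]
        linarith [hNc]
    obtain ⟨l, m, hlm, hmem⟩ := h F hBF
    by_cases hl : l = 0
    · -- use substitution  y ↦ y, z ↦ 0, t ↦ 0
      have hm : m ≠ 0 := fun hm => hlm ⟨hl, hm⟩
      set φ : P6 →ₐ[ℂ] P6 :=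
        aeval (fun i : Fin 6 => if i = 4 then 0 else if i = 5 then 0 else X i) with hφ
      have hker : Ideal.span ({X 5, C l * X 3 + C m * X 4} : Set P6)
          ≤ RingHom.ker (φ : P6 →+* P6) := by
        rw [Ideal.span_le]
        intro g hg
        simp only [Set.mem_insert_iff, Set.mem_singleton_iff] at hg
        rcases hg with rfl | rfl
        · simp [RingHom.mem_ker, hφ, aeval_X]
        · simp [RingHom.mem_ker, hφ, aeval_X, hl]
      have hφF : φ F = 0 := hker hmem
      have hx0 : φ (X 0) = X 0 := by simp [hφ]
      have hx1 : φ (X 1) = X 1 := by simp [hφ]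
      have hx3 : φ (X 3) = X 3 := by simp [hφ]
      have hx4 : φ (X 4) = 0 := by simp [hφ]
      have hφF' : φ F = monomial s1 1 := by
        rw [hFdef, map_add, map_mul, map_mul, map_pow, map_pow, map_pow, map_pow,
          hx0, hx1, hx3, hx4, mono_form' 0 3 N 3, ← hs1]
        rw [zero_pow (by norm_num), mul_zero, add_zero]
      rw [hφF'] at hφF
      have := congrArg (coeff s1) hφF
      rw [coeff_monomial, if_pos rfl, coeff_zero] at this
      exact one_ne_zero this
    · -- use substitution  y ↦ -(m/l) z, t ↦ 0
      set φ : P6 →ₐ[ℂ] P6 :=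
        aeval (fun i : Fin 6 => if i = 3 then C (-(m/l)) * X 4 else if i = 5 then 0 else X i)
        with hφ
      have hx3 : φ (X 3) = C (-(m/l)) * X 4 := by simp [hφ]
      have hx4 : φ (X 4) = X 4 := by simp [hφ]
      have hCr : ∀ r : ℂ, φ (C r) = C r := fun r => by
        simp [hφ, MvPolynomial.algebraMap_eq]
      have hgen : φ (C l * X 3 + C m * X 4) = 0 := by
        rw [map_add, map_mul, map_mul, hCr, hCr, hx3, hx4, ← mul_assoc, ← C_mul,
          show l * -(m/l) = -m from by field_simp, ← add_mul, ← C_add]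
        simp
      have hker : Ideal.span ({X 5, C l * X 3 + C m * X 4} : Set P6)
          ≤ RingHom.ker (φ : P6 →+* P6) := by
        rw [Ideal.span_le]
        intro g hg
        simp only [Set.mem_insert_iff, Set.mem_singleton_iff] at hg
        rcases hg with rfl | rfl
        · simp [RingHom.mem_ker, hφ, aeval_X]
        · exact hgen
      have hφF : φ F = 0 := hker hmem
      have hx0 : φ (X 0) = X 0 := by simp [hφ]
      have hx1 : φ (X 1) = X 1 := by simp [hφ]
      have hφF' : φ F = monomial (Finsupp.single 0 N + Finsupp.single 4 3) ((-(m/l))^3)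
          + monomial s2 1 := by
        rw [hFdef, map_add, map_mul, map_mul, map_pow, map_pow, map_pow, map_pow,
          hx0, hx1, hx3, hx4,
          show (X 0 : P6) ^ N * (C (-(m/l)) * X 4) ^ 3
            = C ((-(m/l))^3) * X 0 ^ N * X 4 ^ 3 from by rw [mul_pow, ← C_pow]; ring,
          mono_form, mono_form' 1 4 N 3, ← hs2]
      rw [hφF'] at hφF
      have := congrArg (coeff s2) hφF
      rw [coeff_add, coeff_monomial, coeff_monomial, coeff_zero,
        if_neg (fun hEq => by
          have h0 := DFunLike.congr_fun hEq (0 : Fin 6)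
          rw [hs2] at h0
          simp [Finsupp.single_apply] at h0
          omega),
        if_pos rfl, zero_add] at this
      exact one_ne_zero this
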